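/- The 9-vertex simple graph consisting of a 4-cycle v1-v2-v3-v4-v1, four further vertices w1, w2, w3, w4 where wi is adjacent exactly to vi and v_{i+1} (indices modulo 4) and to a ninth central vertex c, with c adjacent exactly to w1, w2, w3, w4 (the unique planar graph of diameter 2 with domination number 3), is not an underlying push clique. -/

import Mathlib

/-- A directed graph `A` on `V` is an oriented graph: irreflexive and asymmetric. -/
def IsOriented {V : Type*} (A : V → V → Prop) : Prop :=
  (∀ v, ¬ A v v) ∧ ∀ u v, A u v → ¬ A v u

/-- `u` and `v` are adjacent in `A`. -/
def Adj {V : Type*} (A : V → V → Prop) (u v : V) : Prop :=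
  A u v ∨ A v u

/-- The push of `A` by the vertex set `S`: arcs with exactly one endpoint in `S`
are reversed. -/
def push {V : Type*} (S : Set V) (A : V → V → Prop) (u v : V) : Prop :=
  (Xor' (u ∈ S) (v ∈ S) ∧ A v u) ∨ (¬ Xor' (u ∈ S) (v ∈ S) ∧ A u v)

/-- `u` and `v` agree on `w`. -/
def AgreeOn {V : Type*} (A : V → V → Prop) (u v w : V) : Prop :=
  (A w u ∧ A w v) ∨ (A u w ∧ A v w)

/-- `u` and `v` disagree on `w`. -/
def DisagreeOn {V : Type*} (A : V → V → Prop) (u v w : V) : Prop :=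
  (A u w ∧ A w v) ∨ (A w u ∧ A v w)

/-- `u` and `v` are joined by a directed 2-path in `A`. -/
def TwoPath {V : Type*} (A : V → V → Prop) (u v : V) : Prop :=
  ∃ w, (A u w ∧ A w v) ∨ (A v w ∧ A w u)

/-- `A` is an oriented clique: any two distinct vertices are adjacent or joined
by a directed 2-path. -/
def IsOrientedClique {V : Type*} (A : V → V → Prop) : Prop :=
  ∀ u v, u ≠ v → Adj A u v ∨ TwoPath A u v

/-- `A` is a push clique: every push of `A` is an oriented clique. -/
def IsPushClique {V : Type*} (A : V → V → Prop) : Prop :=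
  ∀ S : Set V, IsOrientedClique (push S A)

/-- `A` is an orientation of the simple graph `G`. -/
def IsOrientationOf {V : Type*} (A : V → V → Prop) (G : SimpleGraph V) : Prop :=
  IsOriented A ∧ ∀ u v, Adj A u v ↔ G.Adj u v

/-- `G` is an underlying push clique. -/
def IsUnderlyingPushClique {V : Type*} (G : SimpleGraph V) : Prop :=
  ∃ A : V → V → Prop, IsOrientationOf A G ∧ IsPushClique A

/-- `G` is an underlying oriented clique. -/
def IsUnderlyingOrientedClique {V : Type*} (G : SimpleGraph V) : Prop :=
  ∃ A : V → V → Prop, IsOrientationOf A G ∧ IsOrientedClique A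


/-! ### Auxiliary material for `stmt_16` -/

abbrev Vt16 : Type := Fin 4 ⊕ (Fin 4 ⊕ Unit)

def fRel16 : Vt16 → Vt16 → Prop := fun u v =>
  Sum.elim (fun i => Sum.elim (fun j => j = i + 1) (fun _ => False) v)
    (Sum.elim (fun i => Sum.elim (fun j => j = i ∨ j = i + 1)
      (Sum.elim (fun _ => False) (fun _ => True)) v) (fun _ => False)) u

instance fRel16.instDec : ∀ u v : Vt16, Decidable (fRel16 u v) := fun u v => by
  rcases u with i | (i | _) <;> rcases v with j | (j | _) <;>
    dsimp only [fRel16, Sum.elim_inl, Sum.elim_inr] <;> infer_instance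

def GG16 : SimpleGraph Vt16 := SimpleGraph.fromRel fRel16

instance GG16.instDec : DecidableRel GG16.Adj :=
  fun u v => inferInstanceAs (Decidable (u ≠ v ∧ (fRel16 u v ∨ fRel16 v u)))

def vV16 (i : Fin 4) : Vt16 := Sum.inl i
def wV16 (i : Fin 4) : Vt16 := Sum.inr (Sum.inl i)
def cV16 : Vt16 := Sum.inr (Sum.inr ())

def treeArc16 : Fin 8 → Vt16 × Vt16 :=
  ![(cV16, wV16 0), (cV16, wV16 1), (cV16, wV16 2), (cV16, wV16 3),
    (wV16 0, vV16 0), (wV16 1, vV16 1), (wV16 2, vV16 2), (wV16 3, vV16 3)]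

def freeE16 : Fin 8 → Vt16 × Vt16 :=
  ![(vV16 0, vV16 1), (vV16 1, vV16 2), (vV16 2, vV16 3), (vV16 3, vV16 0),
    (wV16 0, vV16 1), (wV16 1, vV16 2), (wV16 2, vV16 3), (wV16 3, vV16 0)]

def brel16 (d : Fin 8 → Bool) (u v : Vt16) : Prop :=
  (∃ k, treeArc16 k = (u, v)) ∨
    ∃ k, (d k = true ∧ freeE16 k = (u, v)) ∨ (d k = false ∧ freeE16 k = (v, u))

instance brel16.instDec (d : Fin 8 → Bool) : DecidableRel (brel16 d) := fun u v => by
  unfold brel16; infer_instance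

noncomputable def sFun16 (A : Vt16 → Vt16 → Prop) : Vt16 → Bool := fun x =>
  match x with
  | Sum.inl i =>
      Bool.xor (@decide (A (wV16 i) cV16) (Classical.propDecidable _))
        (@decide (A (vV16 i) (wV16 i)) (Classical.propDecidable _))
  | Sum.inr (Sum.inl i) => @decide (A (wV16 i) cV16) (Classical.propDecidable _)
  | Sum.inr (Sum.inr _) => false

noncomputable def SSet16 (A : Vt16 → Vt16 → Prop) : Set Vt16 := fun x => sFun16 A x = true

lemma mem_SSet16 {A : Vt16 → Vt16 → Prop} {x : Vt16} : x ∈ SSet16 A ↔ sFun16 A x = true :=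
  Iff.rfl

lemma sFun16_c (A : Vt16 → Vt16 → Prop) : sFun16 A cV16 = false := rfl

lemma sFun16_w (A : Vt16 → Vt16 → Prop) (i : Fin 4) :
    sFun16 A (wV16 i) = @decide (A (wV16 i) cV16) (Classical.propDecidable _) := rfl

lemma sFun16_v (A : Vt16 → Vt16 → Prop) (i : Fin 4) :
    sFun16 A (vV16 i) =
      Bool.xor (@decide (A (wV16 i) cV16) (Classical.propDecidable _))
        (@decide (A (vV16 i) (wV16 i)) (Classical.propDecidable _)) := rfl

noncomputable def dF16 (B : Vt16 → Vt16 → Prop) : Fin 8 → Bool :=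
  fun k => @decide (B (freeE16 k).1 (freeE16 k).2) (Classical.propDecidable _)

def coverBody16 (u v : Vt16) : Prop := GG16.Adj u v →
    (∃ k, treeArc16 k = (u, v) ∨ treeArc16 k = (v, u)) ∨
      (∃ k, freeE16 k = (u, v) ∨ freeE16 k = (v, u))

noncomputable instance coverBody16.instDec (u v : Vt16) : Decidable (coverBody16 u v) := by
  unfold coverBody16; infer_instance

lemma cover16 : ∀ u v : Vt16, coverBody16 u v := by decide

lemma freeAdj16 : ∀ k, GG16.Adj (freeE16 k).1 (freeE16 k).2 := by decide

lemma adjCW16 : ∀ i, GG16.Adj cV16 (wV16 i) := by decide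

lemma adjWV16 : ∀ i, GG16.Adj (wV16 i) (vV16 i) := by decide

lemma xor16_a (a : Bool) (h : a = true) : Xor' ((false : Bool) = true) (a = true) := by
  subst h; simp [Xor']

lemma xor16_a' (a : Bool) (h : a = false) : ¬ Xor' ((false : Bool) = true) (a = true) := by
  subst h; simp [Xor']

lemma xor16_b (a b : Bool) (h : b = true) : Xor' (a = true) ((Bool.xor a b) = true) := by
  subst h; cases a <;> simp [Xor']

lemma xor16_b' (a b : Bool) (h : b = false) : ¬ Xor' (a = true) ((Bool.xor a b) = true) := by
  subst h; cases a <;> simp [Xor']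

def keyBody16 (d : Fin 8 → Bool) : Prop := ∃ u v : Vt16, ¬ GG16.Adj u v ∧ u ≠ v ∧
    ∀ x : Vt16, ¬ ((brel16 d u x ∧ brel16 d x v) ∨ (brel16 d v x ∧ brel16 d x u))

instance keyBody16.instDec (d : Fin 8 → Bool) : Decidable (keyBody16 d) := by
  unfold keyBody16; infer_instance

set_option maxRecDepth 100000 in
set_option maxHeartbeats 4000000 in
lemma key16 : ∀ d : Fin 8 → Bool, keyBody16 d := by decide

lemma push_orientation16 {V : Type*} {A : V → V → Prop} {G : SimpleGraph V}
    (h : IsOrientationOf A G) (S : Set V) : IsOrientationOf (push S A) G := by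
  obtain ⟨⟨hirr, hasym⟩, hadj⟩ := h
  refine ⟨⟨?_, ?_⟩, ?_⟩
  · intro v hv
    rcases hv with ⟨hx, hA⟩ | ⟨_, hA⟩
    · rcases hx with ⟨a, b⟩ | ⟨a, b⟩ <;> exact b a
    · exact hirr v hA
  · intro u v h1 h2
    rcases h1 with ⟨hx, ha⟩ | ⟨hx, ha⟩ <;> rcases h2 with ⟨hy, hb⟩ | ⟨hy, hb⟩
    · exact hasym _ _ hb ha
    · exact hy (Or.symm hx)
    · exact hx (Or.symm hy)
    · exact hasym _ _ ha hb
  · intro u v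
    rw [← hadj u v]
    by_cases hx : Xor' (u ∈ S) (v ∈ S)
    · have hx' : Xor' (v ∈ S) (u ∈ S) := Or.symm hx
      constructor
      · rintro ((⟨_, h⟩ | ⟨hn, h⟩) | (⟨_, h⟩ | ⟨hn, h⟩))
        exacts [Or.inr h, absurd hx hn, Or.inl h, absurd hx' hn]
      · rintro (h | h)
        exacts [Or.inr (Or.inl ⟨hx', h⟩), Or.inl (Or.inl ⟨hx, h⟩)]
    · have hx' : ¬ Xor' (v ∈ S) (u ∈ S) := fun hh => hx (Or.symm hh)
      constructor
      · rintro ((⟨hn, h⟩ | ⟨_, h⟩) | (⟨hn, h⟩ | ⟨_, h⟩))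
        exacts [absurd hn hx, Or.inl h, absurd hn hx', Or.inr h]
      · rintro (h | h)
        exacts [Or.inl (Or.inr ⟨hx, h⟩), Or.inr (Or.inr ⟨hx', h⟩)]


/-- The unique planar graph of diameter 2 with domination number 3:
vertices are `Sum.inl i` (the `vᵢ`, forming a 4-cycle), `Sum.inr (Sum.inl i)`
(the `wᵢ`, with `wᵢ` adjacent exactly to `vᵢ`, `v_{i+1}` and `c`), and
`Sum.inr (Sum.inr ())` (the central vertex `c`, adjacent exactly to the
`wᵢ`). -/
theorem stmt_16 :
    ¬ IsUnderlyingPushClique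
      (SimpleGraph.fromRel
        (fun u v : Fin 4 ⊕ (Fin 4 ⊕ Unit) =>
          match u, v with
          | Sum.inl i, Sum.inl j => j = i + 1
          | Sum.inr (Sum.inl i), Sum.inl j => j = i ∨ j = i + 1
          | Sum.inr (Sum.inl _), Sum.inr (Sum.inr _) => True
          | _, _ => False)) := by
  intro h
  have h' : IsUnderlyingPushClique GG16 := by
    convert h using 2
    unfold GG16
    congr 1
    funext u v
    rcases u with i | (i | _) <;> rcases v with j | (j | _) <;> rfl
  obtain ⟨A, hor, hpush⟩ := h'
  classical
  have hor' : IsOrientationOf (push (SSet16 A) A) GG16 := push_orientation16 hor (SSet16 A)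
  obtain ⟨⟨hirr', hasym'⟩, hadj'⟩ := hor'
  obtain ⟨⟨hirr, hasym⟩, hadj⟩ := hor
  -- canonical direction of tree edges after the push
  have hcw : ∀ i, push (SSet16 A) A cV16 (wV16 i) := by
    intro i
    by_cases hA : A cV16 (wV16 i)
    · refine Or.inr ⟨?_, hA⟩
      show ¬ Xor' (sFun16 A cV16 = true) (sFun16 A (wV16 i) = true)
      rw [sFun16_c, sFun16_w]
      exact xor16_a' _ (decide_eq_false (hasym _ _ hA))
    · have hA2 : A (wV16 i) cV16 := by
        rcases (hadj cV16 (wV16 i)).mpr (adjCW16 i) with h | h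
        · exact absurd h hA
        · exact h
      refine Or.inl ⟨?_, hA2⟩
      show Xor' (sFun16 A cV16 = true) (sFun16 A (wV16 i) = true)
      rw [sFun16_c, sFun16_w]
      exact xor16_a _ (decide_eq_true hA2)
  have hwv : ∀ i, push (SSet16 A) A (wV16 i) (vV16 i) := by
    intro i
    by_cases hA : A (vV16 i) (wV16 i)
    · refine Or.inl ⟨?_, hA⟩
      show Xor' (sFun16 A (wV16 i) = true) (sFun16 A (vV16 i) = true)
      rw [sFun16_v, sFun16_w]
      exact xor16_b _ _ (decide_eq_true hA)
    · have hA2 : A (wV16 i) (vV16 i) := by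
        rcases (hadj (wV16 i) (vV16 i)).mpr (adjWV16 i) with h | h
        · exact h
        · exact absurd h hA
      refine Or.inr ⟨?_, hA2⟩
      show ¬ Xor' (sFun16 A (wV16 i) = true) (sFun16 A (vV16 i) = true)
      rw [sFun16_v, sFun16_w]
      exact xor16_b' _ _ (decide_eq_false hA)
  have hcan : ∀ k : Fin 8, push (SSet16 A) A (treeArc16 k).1 (treeArc16 k).2 := by
    intro k
    fin_cases k
    exacts [hcw 0, hcw 1, hcw 2, hcw 3, hwv 0, hwv 1, hwv 2, hwv 3]
  -- encode the pushed orientation by a boolean vector on the free edges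
  set A' := push (SSet16 A) A with hA'def
  set d : Fin 8 → Bool := dF16 A' with hddef
  have harc : ∀ u v, A' u v ↔ brel16 d u v := by
    intro u v
    constructor
    · intro hA
      have hGadj : GG16.Adj u v := (hadj' u v).mp (Or.inl hA)
      rcases cover16 u v hGadj with ⟨k, hk | hk⟩ | ⟨k, hk | hk⟩
      · exact Or.inl ⟨k, hk⟩
      · have := hcan k
        rw [hk] at this
        exact absurd hA (hasym' _ _ this)
      · refine Or.inr ⟨k, Or.inl ⟨?_, hk⟩⟩
        show dF16 A' k = true
        unfold dF16
        rw [hk]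
        exact decide_eq_true hA
      · refine Or.inr ⟨k, Or.inr ⟨?_, hk⟩⟩
        show dF16 A' k = false
        unfold dF16
        rw [hk]
        exact decide_eq_false (hasym' _ _ hA)
    · intro hb
      rcases hb with ⟨k, hk⟩ | ⟨k, ⟨hd, hk⟩ | ⟨hd, hk⟩⟩
      · have := hcan k
        rw [hk] at this
        exact this
      · have hd' : @decide (A' (freeE16 k).1 (freeE16 k).2) (Classical.propDecidable _) = true := hd
        rw [hk] at hd'
        exact of_decide_eq_true hd'
      · have hd' : @decide (A' (freeE16 k).1 (freeE16 k).2) (Classical.propDecidable _) = false := hd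
        rw [hk] at hd'
        have hnb : ¬ A' v u := of_decide_eq_false hd'
        have hGa : GG16.Adj v u := by
          have := freeAdj16 k
          rw [hk] at this
          exact this
        rcases (hadj' v u).mpr hGa with h | h
        · exact absurd h hnb
        · exact h
  obtain ⟨u, v, hnadj, hne, hno2⟩ := key16 d
  rcases hpush (SSet16 A) u v hne with hAdj | ⟨x, hx⟩
  · exact hnadj ((hadj' u v).mp hAdj)
  · refine hno2 x ?_
    rcases hx with ⟨h1, h2⟩ | ⟨h1, h2⟩
    · exact Or.inl ⟨(harc _ _).mp h1, (harc _ _).mp h2⟩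
    · exact Or.inr ⟨(harc _ _).mp h1, (harc _ _).mp h2⟩
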